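/- Let N ≥ 2 and K ≥ 1, and let (w, P) be a configuration with confidence e. Let f : ℝ → ℝ be concave on [0,1] with f(0) = 0, and let l : ℝ → ℝ be convex on the interval [1/N, 1] and satisfy f(x) = x·l(x) for all x ∈ (0,1]. Then the f-impurity satisfies I ≥ l(e). (Paper's Theorem 4, the lower bound l(e) on the impurity.) -/

import Mathlib

open Finset

/-- The maximum of a real-valued vector over the finite index set `Fin N` (`N > 0`). -/
noncomputable def colMax {N : ℕ} (hN : 0 < N) (v : Fin N → ℝ) : ℝ :=
  Finset.univ.sup' (Finset.univ_nonempty_iff.mpr ⟨⟨0, hN⟩⟩) v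

/-- Paper's Theorem 4 (lower bound): for a configuration `(w, P)` with confidence `e`,
if `f` is concave on `[0,1]` with `f 0 = 0`, `l` is convex on `[1/N, 1]` and
`f x = x * l x` on `(0,1]`, then the `f`-impurity is at least `l e`. -/
theorem impurity_lower_bound (N K : ℕ) (hN : 2 ≤ N) (hK : 1 ≤ K)
    (w : Fin K → ℝ) (hw : ∀ k, 0 ≤ w k) (hws : ∑ k, w k = 1)
    (P : Fin K → Fin N → ℝ) (hP : ∀ k i, 0 ≤ P k i) (hPs : ∀ k, ∑ i, P k i = 1)
    (f l : ℝ → ℝ)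
    (hf : ConcaveOn ℝ (Set.Icc (0 : ℝ) 1) f) (hf0 : f 0 = 0)
    (hl : ConvexOn ℝ (Set.Icc (1 / (N : ℝ)) 1) l)
    (hfl : ∀ x ∈ Set.Ioc (0 : ℝ) 1, f x = x * l x)
    (e : ℝ) (he : e = ∑ k, w k * colMax (by omega) (P k)) :
    l e ≤ ∑ k, ∑ i, w k * f (P k i) := by
  have hN0 : 0 < N := by omega
  set m : Fin K → ℝ := fun k => colMax hN0 (P k) with hm
  have hne : (Finset.univ : Finset (Fin N)).Nonempty :=
    Finset.univ_nonempty_iff.mpr ⟨⟨0, hN0⟩⟩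
  -- each P k i ≤ 1
  have hP1 : ∀ k i, P k i ≤ 1 := by
    intro k i
    calc P k i ≤ ∑ j, P k j := Finset.single_le_sum (fun j _ => hP k j) (Finset.mem_univ i)
    _ = 1 := hPs k
  -- m k bounds
  have hm_le1 : ∀ k, m k ≤ 1 := by
    intro k
    exact Finset.sup'_le _ _ fun i _ => hP1 k i
  have hm_ge : ∀ k i, P k i ≤ m k := by
    intro k i
    exact Finset.le_sup' _ (Finset.mem_univ i)
  have hm_lb : ∀ k, 1 / (N : ℝ) ≤ m k := by
    intro k
    rw [div_le_iff₀ (by positivity)]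
    calc (1 : ℝ) = ∑ i, P k i := (hPs k).symm
    _ ≤ ∑ _i : Fin N, m k := Finset.sum_le_sum fun i _ => hm_ge k i
    _ = m k * N := by simp [mul_comm]
  have hm_pos : ∀ k, 0 < m k := fun k =>
    lt_of_lt_of_le (by positivity) (hm_lb k)
  -- l is antitone on (0,1]
  have hl_anti : ∀ x y : ℝ, 0 < x → x ≤ y → y ≤ 1 → l y ≤ l x := by
    intro x y hx hxy hy1
    have hy : 0 < y := lt_of_lt_of_le hx hxy
    have hab : x / y + (1 - x / y) = 1 := by ring
    have ha : 0 ≤ x / y := by positivity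
    have hb : 0 ≤ 1 - x / y := by
      have : x / y ≤ 1 := (div_le_one hy).mpr hxy
      linarith
    have key := hf.2 (Set.mem_Icc.mpr ⟨hy.le, hy1⟩)
      (Set.mem_Icc.mpr ⟨le_refl (0:ℝ), by norm_num⟩) ha hb hab
    have hxy' : (x / y) • y + (1 - x / y) • (0:ℝ) = x := by
      simp only [smul_eq_mul, mul_zero, add_zero]; exact div_mul_cancel₀ x hy.ne'
    rw [hxy', hf0] at key
    -- key : (x/y) • f y + (1 - x/y) • 0 ≤ f x
    have key' : (x / y) * f y ≤ f x := by
      simpa using key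
    rw [hfl x ⟨hx, le_trans hxy hy1⟩, hfl y ⟨hy, hy1⟩] at key'
    have : x * l y ≤ x * l x := by
      have h1 : x / y * (y * l y) = x * l y := by field_simp
      linarith [h1 ▸ key']
    exact le_of_mul_le_mul_left this hx
  -- per-k bound: l (m k) ≤ ∑ i, f (P k i)
  have hk_bound : ∀ k, l (m k) ≤ ∑ i, f (P k i) := by
    intro k
    have step : ∀ i, P k i * l (m k) ≤ f (P k i) := by
      intro i
      rcases eq_or_lt_of_le (hP k i) with h0 | h0
      · rw [← h0, hf0]; simp
      · rw [hfl (P k i) ⟨h0, hP1 k i⟩]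
        exact mul_le_mul_of_nonneg_left (hl_anti _ _ h0 (hm_ge k i) (hm_le1 k)) (hP k i)
    calc l (m k) = (∑ i, P k i) * l (m k) := by rw [hPs k]; ring
    _ = ∑ i, P k i * l (m k) := by rw [Finset.sum_mul]
    _ ≤ ∑ i, f (P k i) := Finset.sum_le_sum fun i _ => step i
  -- Jensen
  have he' : e = ∑ k, w k • m k := by simpa [hm] using he
  have jensen : l e ≤ ∑ k, w k * l (m k) := by
    rw [he']
    have := hl.map_sum_le (t := Finset.univ) (w := w) (p := m)
      (fun k _ => hw k) hws (fun k _ => Set.mem_Icc.mpr ⟨hm_lb k, hm_le1 k⟩)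
    simpa [smul_eq_mul] using this
  calc l e ≤ ∑ k, w k * l (m k) := jensen
  _ ≤ ∑ k, w k * ∑ i, f (P k i) :=
      Finset.sum_le_sum fun k _ => mul_le_mul_of_nonneg_left (hk_bound k) (hw k)
  _ = ∑ k, ∑ i, w k * f (P k i) := by
      simp [Finset.mul_sum]
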